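/- If A is an n×n real matrix all of whose entries have absolute value at most a, then |det A| ≤ (√n · a)^n. -/

import Mathlib

lemma amgm_aux {n : ℕ} (hn : 0 < n) (μ : Fin n → ℝ) (hμ : ∀ i, 0 ≤ μ i) :
    ∏ i, μ i ≤ ((∑ i, μ i) / n) ^ n := by
  have hn' : (n:ℝ) ≠ 0 := Nat.cast_ne_zero.2 hn.ne'
  have key := Real.geom_mean_le_arith_mean_weighted Finset.univ (fun _ => 1/(n:ℝ)) μ
    (fun i _ => by positivity) (by simp; field_simp) (fun i _ => hμ i)
  have h1 : ∑ i, (1/(n:ℝ)) * μ i = (∑ i, μ i)/n := by rw [← Finset.mul_sum]; ring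
  have h2 : ∏ i, μ i = (∏ i, μ i ^ (1/(n:ℝ)))^n := by
    rw [← Finset.prod_pow]
    refine Finset.prod_congr rfl fun i _ => ?_
    rw [← Real.rpow_natCast (μ i ^ (1/(n:ℝ))), ← Real.rpow_mul (hμ i)]
    simp [hn']
  rw [h2]
  apply pow_le_pow_left₀ (Finset.prod_nonneg fun i _ => Real.rpow_nonneg (hμ i) _)
  exact h1 ▸ key

lemma trace_herm {n : ℕ} {B : Matrix (Fin n) (Fin n) ℝ} (hB : B.IsHermitian) :
    B.trace = ∑ i, hB.eigenvalues i := by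
  conv_lhs => rw [hB.spectral_theorem, Unitary.conjStarAlgAut_apply]
  rw [Matrix.trace_mul_comm, ← mul_assoc]
  have : (star (hB.eigenvectorUnitary : Matrix (Fin n) (Fin n) ℝ)) *
      (hB.eigenvectorUnitary : Matrix (Fin n) (Fin n) ℝ) = 1 :=
    Unitary.coe_star_mul_self _
  rw [this, one_mul, Matrix.trace_diagonal]
  simp

theorem hadamard_entrywise (n : ℕ) (a : ℝ) (A : Matrix (Fin n) (Fin n) ℝ)
    (h : ∀ i j, |A i j| ≤ a) :
    |A.det| ≤ (Real.sqrt n * a)^n := by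
  rcases Nat.eq_zero_or_pos n with hn | hn
  · subst hn
    simp [Matrix.det_fin_zero]
  have ha : 0 ≤ a := le_trans (abs_nonneg _) (h ⟨0,hn⟩ ⟨0,hn⟩)
  have hn' : (0:ℝ) < n := by exact_mod_cast hn
  set B := A.conjTranspose * A with hBdef
  have hB : B.PosSemidef := Matrix.posSemidef_conjTranspose_mul_self A
  have hherm := hB.1
  have hμ0 : ∀ i, 0 ≤ hherm.eigenvalues i := hB.eigenvalues_nonneg
  have hdet : B.det = ∏ i, hherm.eigenvalues i := by
    simpa using hherm.det_eq_prod_eigenvalues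
  have hdetA : B.det = (A.det)^2 := by
    rw [hBdef, Matrix.det_mul, Matrix.det_conjTranspose]
    simp [sq]
  -- trace bound
  have htr : B.trace ≤ n * (n * a^2) := by
    rw [Matrix.trace]
    have hdiag : ∀ i, B.diag i ≤ n * a^2 := by
      intro i
      have : B.diag i = ∑ j, (A j i)^2 := by
        simp [hBdef, Matrix.diag, Matrix.mul_apply, Matrix.conjTranspose_apply, sq]
      rw [this]
      calc ∑ j, (A j i)^2 ≤ ∑ _j : Fin n, a^2 := by
            refine Finset.sum_le_sum fun j _ => ?_
            rw [← sq_abs]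
            exact pow_le_pow_left₀ (abs_nonneg _) (h j i) 2
        _ = n * a^2 := by simp [mul_comm]
    calc ∑ i, B.diag i ≤ ∑ _i : Fin n, (n:ℝ) * a^2 := Finset.sum_le_sum fun i _ => hdiag i
      _ = n * (n * a^2) := by simp [mul_comm]
  have amgm := amgm_aux hn hherm.eigenvalues hμ0
  have htr' : (∑ i, hherm.eigenvalues i) / n ≤ n * a^2 := by
    rw [div_le_iff₀ hn']
    calc ∑ i, hherm.eigenvalues i = B.trace := (trace_herm hherm).symm
      _ ≤ n * (n * a^2) := htr
      _ = n * a^2 * n := by ring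
  have hsum0 : 0 ≤ (∑ i, hherm.eigenvalues i) / n :=
    div_nonneg (Finset.sum_nonneg fun i _ => hμ0 i) hn'.le
  have key : (A.det)^2 ≤ ((Real.sqrt n * a)^n)^2 := by
    calc (A.det)^2 = ∏ i, hherm.eigenvalues i := by rw [← hdetA, hdet]
      _ ≤ ((∑ i, hherm.eigenvalues i) / n) ^ n := amgm
      _ ≤ (n * a^2)^n := pow_le_pow_left₀ hsum0 htr' n
      _ = ((Real.sqrt n * a)^n)^2 := by
          rw [← pow_mul, mul_comm n 2, pow_mul, mul_pow, mul_pow, Real.sq_sqrt hn'.le, mul_pow]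
  have h0 : (0:ℝ) ≤ (Real.sqrt n * a)^n :=
    pow_nonneg (mul_nonneg (Real.sqrt_nonneg _) ha) n
  calc |A.det| = Real.sqrt ((A.det)^2) := (Real.sqrt_sq_eq_abs _).symm
    _ ≤ Real.sqrt (((Real.sqrt n * a)^n)^2) := Real.sqrt_le_sqrt key
    _ = (Real.sqrt n * a)^n := by rw [Real.sqrt_sq h0]
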